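/- Let R be a commutative ring and A = [[a,b],[c,d]] ∈ M₂(R) unimodular. If there exists (x,y,z,w) ∈ R⁴ with 1 − ax − by − cz − dw + (ad−bc)(xw − yz) = 0, then A is weakly determinant liftable. -/
import Mathlib

open Matrix

theorem stmt13 {R : Type*} [CommRing R] (a b c d : R)
    (hA : Ideal.span {a, b, c, d} = (⊤ : Ideal R))
    (h : ∃ x y z w : R,
      1 - a * x - b * y - c * z - d * w + (a * d - b * c) * (x * w - y * z) = 0) :
    ∃ B : Matrix (Fin 2) (Fin 2) R,
      (∀ i j, B i j - (!![a, b; c, d] : Matrix (Fin 2) (Fin 2) R) i j ∈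
        Ideal.span {a * d - b * c}) ∧ B.det = 0 := by
  obtain ⟨x, y, z, w, hx⟩ := h
  refine ⟨!![a - (a*d-b*c)*w, b + (a*d-b*c)*z; c + (a*d-b*c)*y, d - (a*d-b*c)*x], ?_, ?_⟩
  · intro i j
    fin_cases i <;> fin_cases j <;>
      simp only [Matrix.cons_val_zero, Matrix.cons_val_one, Matrix.head_cons,
        Matrix.cons_val', Matrix.head_fin_const, Matrix.empty_val',
        Ideal.mem_span_singleton, Fin.isValue, Matrix.of_apply, Fin.zero_eta, Fin.mk_one]
    · exact ⟨-w, by ring⟩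
    · exact ⟨z, by ring⟩
    · exact ⟨y, by ring⟩
    · exact ⟨-x, by ring⟩
  · simp only [Matrix.det_fin_two_of]
    linear_combination (a*d-b*c) * hx
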